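/- Let P ≥ 1 be an integer and c_1 = -P/(2N), so the DAFT-domain index of tap (l,q) is k_{l,q} = q + Pl. Under Assumption 1 (mutual independence of indicators with distinct delay and Doppler indices, each Bernoulli(p_d p_D)), for every DAFT-domain index k the count X_k = |{(l,q) : I_{l,q}=1, q + Pl = k}| satisfies P[X_k > M] ≤ P[B > M] for all M, where B ~ Binomial(2⌈Q/P⌉ + 1, p_d p_D). -/

import Mathlib

open ProbabilityTheory MeasureTheory

/-- CCDF of `Binomial(n, p)` at `M`: `P[B > M]`. -/
noncomputable def binomCCDF (n : ℕ) (p : ℝ) (M : ℕ) : ℝ :=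
  ∑ k ∈ Finset.range (n + 1),
    if M < k then (n.choose k : ℝ) * p ^ k * (1 - p) ^ (n - k) else 0



noncomputable def tailLE (n : ℕ) (p : ℝ) (M : ℕ) : ℝ :=
  ∑ k ∈ Finset.range (n + 1),
    if M ≤ k then (n.choose k : ℝ) * p ^ k * (1 - p) ^ (n - k) else 0

lemma binomCCDF_nonneg {p : ℝ} (hp0 : 0 ≤ p) (hp1 : p ≤ 1) (n M : ℕ) :
    0 ≤ binomCCDF n p M := by
  apply Finset.sum_nonneg
  intro k _
  have h1 : (0:ℝ) ≤ 1 - p := by linarith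
  split
  · positivity
  · exact le_rfl

lemma binomCCDF_le_tailLE {p : ℝ} (hp0 : 0 ≤ p) (hp1 : p ≤ 1) (n M : ℕ) :
    binomCCDF n p M ≤ tailLE n p M := by
  apply Finset.sum_le_sum
  intro k _
  have h1 : (0:ℝ) ≤ 1 - p := by linarith
  by_cases h : M < k
  · rw [if_pos h, if_pos h.le]
  · rw [if_neg h]
    split
    · positivity
    · exact le_rfl

lemma binomCCDF_pascal (n : ℕ) (p : ℝ) (M : ℕ) :
    binomCCDF (n + 1) p M = p * tailLE n p M + (1 - p) * binomCCDF n p M := by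
  unfold binomCCDF tailLE
  rw [Finset.sum_range_succ']
  simp only [Nat.not_lt_zero, if_neg, Nat.choose_succ_succ, Nat.cast_add, Nat.succ_sub_succ]
  have hsplit : ∀ i ∈ Finset.range (n + 1),
      (if M < i + 1 then ((n.choose i : ℝ) + n.choose (i+1)) * p ^ (i+1) * (1-p) ^ (n - i) else 0)
      = p * (if M ≤ i then (n.choose i : ℝ) * p ^ i * (1-p) ^ (n - i) else 0)
        + (if M < i + 1 then (n.choose (i+1) : ℝ) * p ^ (i+1) * (1-p) ^ (n - i) else 0) := by
    intro i _
    by_cases h : M ≤ i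
    · rw [if_pos (Nat.lt_succ_of_le h), if_pos h, if_pos (Nat.lt_succ_of_le h)]
      ring
    · rw [if_neg (by omega), if_neg h, if_neg (by omega)]
      ring
  rw [Finset.sum_congr rfl hsplit, Finset.sum_add_distrib, ← Finset.mul_sum]
  have hB : (∑ i ∈ Finset.range (n + 1),
      if M < i + 1 then (n.choose (i+1) : ℝ) * p ^ (i+1) * (1-p) ^ (n - i) else 0)
      = (1 - p) * ∑ k ∈ Finset.range (n + 1),
          (if M < k then (n.choose k : ℝ) * p ^ k * (1 - p) ^ (n - k) else 0) := by
    rw [Finset.sum_range_succ, Nat.choose_succ_self, Finset.mul_sum, Finset.sum_range_succ']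
    simp only [Nat.not_lt_zero, if_neg, Nat.cast_zero, if_false, zero_mul, mul_zero, add_zero]
    rw [ite_self, add_zero]
    apply Finset.sum_congr rfl
    intro k hk
    rw [Finset.mem_range] at hk
    have hnk : n - k = (n - (k + 1)) + 1 := by omega
    by_cases h : M < k + 1
    · rw [if_pos h, if_pos h, hnk, pow_succ]
      ring
    · rw [if_neg h, if_neg h, mul_zero]
  rw [hB]
  simp

lemma binomCCDF_mono {p : ℝ} (hp0 : 0 ≤ p) (hp1 : p ≤ 1) (M : ℕ) :
    ∀ {m n : ℕ}, m ≤ n → binomCCDF m p M ≤ binomCCDF n p M := by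
  intro m n hmn
  induction n, hmn using Nat.le_induction with
  | base => exact le_rfl
  | succ n hmn ih =>
    refine ih.trans ?_
    rw [binomCCDF_pascal]
    have h1 := binomCCDF_le_tailLE hp0 hp1 n M
    nlinarith [binomCCDF_nonneg hp0 hp1 n M]

open MeasureTheory ProbabilityTheory in
lemma binom_bound {Ω : Type*} [MeasurableSpace Ω] (μ : Measure Ω) [IsProbabilityMeasure μ]
    {ι : Type*} (s : Finset ι) (f : ι → Ω → ℕ) {p : ℝ} (hp0 : 0 ≤ p) (hp1 : p ≤ 1)
    (hmeas : ∀ a, Measurable (f a)) (hval : ∀ a ω, f a ω ≤ 1)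
    (hber : ∀ a ∈ s, μ {ω | f a ω = 1} = ENNReal.ofReal p)
    (hindep : iIndepFun (fun a : s => f a) μ)
    {n : ℕ} (hn : s.card ≤ n) (M : ℕ) :
    μ {ω | M < (s.filter (fun a => f a ω = 1)).card} ≤ ENNReal.ofReal (binomCCDF n p M) := by
  classical
  set m := s.card with hm
  -- the elementary events
  set E : Finset {x // x ∈ s} → Set Ω :=
    fun T => ⋂ a : {x // x ∈ s}, f a ⁻¹' {if a ∈ T then 1 else 0} with hE
  have hEmeas : ∀ T, MeasurableSet (E T) := by
    intro T
    exact MeasurableSet.iInter fun a => (hmeas a) (measurableSet_singleton _)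
  -- probability of one coordinate events
  have h1 : ∀ a : {x // x ∈ s}, μ (f a ⁻¹' {1}) = ENNReal.ofReal p := by
    intro a
    have : f a ⁻¹' {1} = {ω | f a.1 ω = 1} := rfl
    rw [this, hber a.1 a.2]
  have h0 : ∀ a : {x // x ∈ s}, μ (f a ⁻¹' {0}) = ENNReal.ofReal (1 - p) := by
    intro a
    have hc : f (a : ι) ⁻¹' {0} = (f (a : ι) ⁻¹' {1})ᶜ := by
      ext ω
      have := hval a.1 ω
      simp only [Set.mem_preimage, Set.mem_singleton_iff, Set.mem_compl_iff]
      omega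
    rw [hc, measure_compl ((hmeas a.1) (measurableSet_singleton _)) (measure_ne_top μ _),
      h1 a, measure_univ]
    rw [← ENNReal.ofReal_one, ← ENNReal.ofReal_sub _ hp0]
  -- measure of elementary events
  have hEμ : ∀ T : Finset {x // x ∈ s},
      μ (E T) = ENNReal.ofReal (p ^ T.card * (1 - p) ^ (m - T.card)) := by
    intro T
    rw [hE]
    rw [hindep.meas_iInter (fun a => ⟨{if a ∈ T then 1 else 0}, measurableSet_singleton _, rfl⟩)]
    have hfac : ∀ a : {x // x ∈ s},
        μ (f a ⁻¹' {if a ∈ T then 1 else 0}) = ENNReal.ofReal (if a ∈ T then p else 1 - p) := by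
      intro a
      by_cases h : a ∈ T
      · simp only [h, if_true]; exact h1 a
      · simp only [h, if_false]; exact h0 a
    rw [Finset.prod_congr rfl (fun a _ => hfac a),
      ← ENNReal.ofReal_prod_of_nonneg (by intro a _; split <;> [exact hp0; linarith])]
    congr 1
    rw [Finset.prod_ite, Finset.prod_const, Finset.prod_const]
    have hT : Finset.univ.filter (fun a => a ∈ T) = T := by ext a; simp
    have hcard : (Finset.univ.filter (fun a => ¬ a ∈ T)).card = m - T.card := by
      have := Finset.card_filter_add_card_filter_not
        (s := (Finset.univ : Finset {x // x ∈ s})) (p := fun a => a ∈ T)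
      rw [hT] at this
      have hu : (Finset.univ : Finset {x // x ∈ s}).card = m := by
        rw [Finset.card_univ, Fintype.card_coe]
      omega
    rw [hT, hcard]
  -- partition of the event
  have hpart : {ω | M < (s.filter (fun a => f a ω = 1)).card}
      = ⋃ T ∈ Finset.univ.filter (fun T : Finset {x // x ∈ s} => M < T.card), E T := by
    ext ω
    simp only [Set.mem_setOf_eq, Set.mem_iUnion, Finset.mem_filter, Finset.mem_univ, true_and]
    have hcount : ∀ T : Finset {x // x ∈ s}, ω ∈ E T →
        (s.filter (fun a => f a ω = 1)).card = T.card := by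
      intro T hT
      rw [hE] at hT
      simp only [Set.mem_iInter, Set.mem_preimage, Set.mem_singleton_iff] at hT
      rw [Finset.card_filter, ← Finset.sum_attach s (fun a => if f a ω = 1 then 1 else 0)]
      have hterm : ∀ a ∈ s.attach, (if f a.1 ω = 1 then 1 else 0) = (if a ∈ T then 1 else 0) := by
        intro a _
        rw [hT a]
        by_cases h : a ∈ T <;> simp [h]
      rw [Finset.sum_congr rfl hterm, ← Finset.univ_eq_attach, ← Finset.card_filter]
      congr 1
      ext a
      simp
    constructor
    · intro hM
      refine ⟨Finset.univ.filter (fun a => f a.1 ω = 1), ?_, ?_⟩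
      · have : (Finset.univ.filter (fun a : {x // x ∈ s} => f a.1 ω = 1)).card
            = (s.filter (fun a => f a ω = 1)).card := by
          rw [Finset.card_filter, Finset.card_filter, Finset.univ_eq_attach,
            Finset.sum_attach s (fun a => if f a ω = 1 then 1 else 0)]
        omega
      · rw [hE]
        simp only [Set.mem_iInter, Set.mem_preimage, Set.mem_singleton_iff,
          Finset.mem_filter, Finset.mem_univ, true_and]
        intro a
        have := hval a.1 ω
        by_cases h : f a.1 ω = 1
        · simp [h]
        · have h0' : f a.1 ω = 0 := by omega
          simp [h, h0']
    · rintro ⟨T, hTc, hTE⟩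
      rw [hcount T hTE]; exact hTc
  have hdisj : Set.PairwiseDisjoint
      (↑(Finset.univ.filter (fun T : Finset {x // x ∈ s} => M < T.card))) E := by
    intro T _ T' _ hne
    refine Set.disjoint_left.2 fun ω hω hω' => hne ?_
    rw [hE] at hω hω'
    simp only [Set.mem_iInter, Set.mem_preimage, Set.mem_singleton_iff] at hω hω'
    ext a
    have h := hω a
    have h' := hω' a
    by_cases ha : a ∈ T <;> by_cases ha' : a ∈ T' <;> simp [ha, ha'] at h h' ⊢ <;> omega
  rw [hpart, measure_biUnion_finset hdisj (fun T _ => hEmeas T)]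
  rw [Finset.sum_congr rfl (fun T _ => hEμ T)]
  have hnn : ∀ T : Finset {x // x ∈ s},
      T ∈ Finset.univ.filter (fun T : Finset {x // x ∈ s} => M < T.card) →
      0 ≤ p ^ T.card * (1 - p) ^ (m - T.card) := by
    intro T _
    have h1 : (0:ℝ) ≤ 1 - p := by linarith
    positivity
  rw [← ENNReal.ofReal_sum_of_nonneg hnn]
  apply ENNReal.ofReal_le_ofReal
  have key : (∑ T ∈ Finset.univ.filter (fun T : Finset {x // x ∈ s} => M < T.card),
      p ^ T.card * (1 - p) ^ (m - T.card)) = binomCCDF m p M := by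
    rw [Finset.sum_filter, ← Finset.powerset_univ, Finset.sum_powerset]
    have hinner : ∀ j ∈ Finset.range ((Finset.univ : Finset {x // x ∈ s}).card + 1),
        (∑ T ∈ Finset.powersetCard j (Finset.univ : Finset {x // x ∈ s}),
          (if M < T.card then p ^ T.card * (1 - p) ^ (m - T.card) else 0))
        = (if M < j then (m.choose j : ℝ) * p ^ j * (1 - p) ^ (m - j) else 0) := by
      intro j _
      rw [Finset.sum_powersetCard j (Finset.univ : Finset {x // x ∈ s})
        (fun c => if M < c then p ^ c * (1 - p) ^ (m - c) else 0)]
      rw [Finset.card_univ, Fintype.card_coe, ← hm, nsmul_eq_mul]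
      split
      · ring
      · rw [mul_zero]
    rw [Finset.sum_congr rfl hinner, Finset.card_univ, Fintype.card_coe, ← hm]
    rfl
  rw [key]
  exact binomCCDF_mono hp0 hp1 M hn


lemma card_bound (Lb : ℤ) (Q P : ℕ) (hP : 1 ≤ P) (k : ℤ) :
    (((Finset.Icc (0 : ℤ) Lb) ×ˢ (Finset.Icc (-(Q : ℤ)) (Q : ℤ))).filter
      (fun lq => lq.2 + (P : ℤ) * lq.1 = k)).card ≤ 2 * ((Q + P - 1) / P) + 1 := by
  classical
  set S := ((Finset.Icc (0 : ℤ) Lb) ×ˢ (Finset.Icc (-(Q : ℤ)) (Q : ℤ))).filter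
      (fun lq => lq.2 + (P : ℤ) * lq.1 = k) with hS
  set C : ℕ := (Q + P - 1) / P with hCdef
  have hPpos : (0 : ℤ) < (P : ℤ) := by exact_mod_cast hP
  have hmem : ∀ a ∈ S, -(Q:ℤ) ≤ a.2 ∧ a.2 ≤ Q ∧ a.2 + (P:ℤ) * a.1 = k := by
    intro a ha
    rw [hS, Finset.mem_filter, Finset.mem_product, Finset.mem_Icc, Finset.mem_Icc] at ha
    exact ⟨ha.1.2.1, ha.1.2.2, ha.2⟩
  have hinj : ∀ a ∈ S, ∀ b ∈ S, ((a.2 + Q) / (P:ℤ)) = ((b.2 + Q) / (P:ℤ)) → a = b := by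
    intro a ha b hb hdiv
    obtain ⟨ha1, ha2, ha3⟩ := hmem a ha
    obtain ⟨hb1, hb2, hb3⟩ := hmem b hb
    have hmod : (a.2 + Q) % (P:ℤ) = (b.2 + Q) % (P:ℤ) :=
      Int.modEq_iff_dvd.mpr ⟨a.1 - b.1, by linear_combination hb3 - ha3⟩
    have hea := Int.mul_ediv_add_emod (a.2 + Q) (P:ℤ)
    have heb := Int.mul_ediv_add_emod (b.2 + Q) (P:ℤ)
    rw [hdiv, hmod] at hea
    have h2 : a.2 = b.2 := by omega
    have h1 : a.1 = b.1 := by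
      have hP' : (P:ℤ) * a.1 = (P:ℤ) * b.1 := by omega
      exact mul_left_cancel₀ (by positivity) hP'
    exact Prod.ext h1 h2
  have hcardle : S.card ≤ (Finset.Icc (0:ℤ) ((2*Q:ℤ)/P)).card := by
    apply Finset.card_le_card_of_injOn (fun a => (a.2 + Q) / (P:ℤ))
    · intro a ha
      obtain ⟨ha1, ha2, _⟩ := hmem a ha
      rw [Finset.mem_coe, Finset.mem_Icc]
      exact ⟨Int.ediv_nonneg (by omega) hPpos.le, Int.ediv_le_ediv hPpos (by omega)⟩
    · intro a ha b hb h
      exact hinj a ha b hb h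
  have hC : (Q:ℤ) ≤ (P:ℤ) * (C:ℤ) := by
    have h1 := Nat.div_add_mod (Q + P - 1) P
    have h2 := Nat.mod_lt (Q + P - 1) (show 0 < P by omega)
    have hn : Q ≤ P * C := by rw [hCdef]; omega
    exact_mod_cast hn
  have hdivle : (2*(Q:ℤ))/P ≤ 2 * (C:ℤ) := by
    have h1 : (2*(Q:ℤ)) ≤ (2 * (C:ℤ)) * P := by linarith
    calc (2*(Q:ℤ))/P ≤ ((2 * (C:ℤ)) * P) / P := Int.ediv_le_ediv hPpos h1
    _ = 2 * (C:ℤ) := Int.mul_ediv_cancel _ (by positivity)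
  rw [Int.card_Icc] at hcardle
  have htn : ((2*(Q:ℤ))/P + 1 - 0).toNat ≤ 2 * C + 1 :=
    Int.toNat_le.mpr (by push_cast; omega)
  omega

/-- With `P ≥ 1` and `c₁ = -P/(2N)` (DAFT-domain index `k_{l,q} = q + P·l`), under Assumption 1
(indicators at pairwise distinct delay and Doppler indices are mutually independent, each
`Bernoulli(p_d p_D)`), for every DAFT-domain index `k` and every `M`, the collision count
`X_k = |{(l,q) : I_{l,q} = 1, q + P·l = k}|` satisfies `P[X_k > M] ≤ P[B > M]` with
`B ~ Binomial(2⌈Q/P⌉+1, p_d p_D)` (here `⌈Q/P⌉ = (Q + P - 1)/P`). -/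
theorem assumption1_collision_ccdf_bound
    {Ω : Type*} [MeasurableSpace Ω] (μ : MeasureTheory.Measure Ω) [IsProbabilityMeasure μ]
    (L Q N P : ℕ) (hL : 1 ≤ L) (hQ : 1 ≤ Q) (hN : 1 ≤ N) (hP : 1 ≤ P) (pd pD : ℝ)
    (hpd : 0 < pd) (hpd1 : pd < 1) (hpD : 0 < pD) (hpD1 : pD < 1)
    (I : ℤ × ℤ → Ω → ℕ)
    (hmeas : ∀ lq, Measurable (I lq))
    (hval : ∀ lq ω, I lq ω ≤ 1)
    (hber : ∀ lq ∈ (Finset.Icc (0 : ℤ) ((L : ℤ) - 1)) ×ˢ (Finset.Icc (-(Q : ℤ)) (Q : ℤ)),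
      μ {ω | I lq ω = 1} = ENNReal.ofReal (pd * pD))
    (hindep : ∀ s : Finset (ℤ × ℤ),
      (∀ a ∈ s, ∀ b ∈ s, a ≠ b → a.1 ≠ b.1 ∧ a.2 ≠ b.2) →
      iIndepFun (fun a : s => I a) μ) :
    ∀ (k : ℤ) (M : ℕ),
      μ {ω | M < (((Finset.Icc (0 : ℤ) ((L : ℤ) - 1)) ×ˢ (Finset.Icc (-(Q : ℤ)) (Q : ℤ))).filter
            (fun lq => I lq ω = 1 ∧ lq.2 + (P : ℤ) * lq.1 = k)).card}
        ≤ ENNReal.ofReal (binomCCDF (2 * ((Q + P - 1) / P) + 1) (pd * pD) M) := by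
  intro k M
  set grid := (Finset.Icc (0 : ℤ) ((L : ℤ) - 1)) ×ˢ (Finset.Icc (-(Q : ℤ)) (Q : ℤ)) with hg
  set S := grid.filter (fun lq => lq.2 + (P : ℤ) * lq.1 = k) with hSdef
  have hPpos : (0 : ℤ) < (P : ℤ) := by exact_mod_cast hP
  have hfilter : ∀ ω, grid.filter (fun lq => I lq ω = 1 ∧ lq.2 + (P:ℤ) * lq.1 = k)
      = S.filter (fun lq => I lq ω = 1) := by
    intro ω
    rw [hSdef, Finset.filter_filter]
    apply Finset.filter_congr
    intro x _
    exact and_comm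
  have hset : {ω | M < ((grid.filter
        (fun lq => I lq ω = 1 ∧ lq.2 + (P:ℤ) * lq.1 = k))).card}
      = {ω | M < (S.filter (fun lq => I lq ω = 1)).card} := by
    ext ω
    rw [Set.mem_setOf_eq, Set.mem_setOf_eq, hfilter ω]
  rw [hset]
  have hp0' : 0 ≤ pd * pD := le_of_lt (mul_pos hpd hpD)
  have hp1' : pd * pD ≤ 1 := by nlinarith
  have hber' : ∀ a ∈ S, μ {ω | I a ω = 1} = ENNReal.ofReal (pd * pD) := by
    intro a ha
    exact hber a (Finset.filter_subset _ _ ha)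
  have hdist : ∀ a ∈ S, ∀ b ∈ S, a ≠ b → a.1 ≠ b.1 ∧ a.2 ≠ b.2 := by
    intro a ha b hb hne
    have ha3 : a.2 + (P:ℤ) * a.1 = k := (Finset.mem_filter.mp ha).2
    have hb3 : b.2 + (P:ℤ) * b.1 = k := (Finset.mem_filter.mp hb).2
    constructor
    · intro h
      apply hne
      have h2 : a.2 = b.2 := by rw [h] at ha3; omega
      exact Prod.ext h h2
    · intro h
      apply hne
      have hPeq : (P:ℤ) * a.1 = (P:ℤ) * b.1 := by omega
      exact Prod.ext (mul_left_cancel₀ (by positivity) hPeq) h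
  exact binom_bound μ S I hp0' hp1' hmeas hval hber' (hindep S hdist)
    (card_bound ((L:ℤ)-1) Q P hP k) M
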